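/- arXiv:1109.1844 — 6 statements merged into one kernel-verified Lean document; each statement's English description precedes it below -/
import Mathlib

section
/- Let C = {C_1, …, C_k} be a k-clustering of (X, s) that is separation-uniform with parameter λ (i.e., s(x,y) = λ for all x ≁_C y). Then for every weight function w on X, rcut(C, w[X], s) = (λ/2)·(k−1)·w(X). -/
open Finset

/-- A weight function assigns a positive real weight to every point. -/
def IsWeight {X : Type*} (w : X → ℝ) : Prop := ∀ x, 0 < w x

/-- A k-clustering: a partition of `X` into `k` pairwise disjoint nonempty parts. -/
def IsClustering {X : Type*} [Fintype X] [DecidableEq X]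
    (C : Finset (Finset X)) (k : ℕ) : Prop :=
  C.card = k ∧ (∀ A ∈ C, A.Nonempty) ∧
  (∀ A ∈ C, ∀ B ∈ C, A ≠ B → Disjoint A B) ∧
  (∀ x : X, ∃ A ∈ C, x ∈ A)

/-- `x ∼_C y`: `x` and `y` lie in the same cluster of `C`. -/
def SameCluster {X : Type*} [DecidableEq X] (C : Finset (Finset X)) (x y : X) : Prop :=
  ∃ A ∈ C, x ∈ A ∧ y ∈ A

/-- The ratio-cut cost of a clustering `C` of weighted data `(w[X], s)`. -/
noncomputable def rcut {X : Type*} [Fintype X] [DecidableEq X]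
    (C : Finset (Finset X)) (w : X → ℝ) (s : X → X → ℝ) : ℝ :=
  (1 / 2) * ∑ A ∈ C, (∑ x ∈ A, ∑ y ∈ Aᶜ, s x y * w x * w y) / (∑ x ∈ A, w x)

/-- if `C` is separation-uniform with parameter `lam`, then for every weight
function `w`, `rcut(C, w[X], s) = (lam/2) * (k - 1) * w(X)`. -/
theorem rcut_of_separationUniform {X : Type*} [Fintype X] [DecidableEq X]
    (s : X → X → ℝ) (hsym : ∀ x y, s x y = s y x) (hnn : ∀ x y, 0 ≤ s x y)
    (k : ℕ) (hk1 : 1 < k) (hk2 : k < Fintype.card X)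
    (C : Finset (Finset X)) (hC : IsClustering C k)
    (lam : ℝ) (hsep : ∀ x y : X, ¬ SameCluster C x y → s x y = lam)
    (w : X → ℝ) (hw : IsWeight w) :
    rcut C w s = (lam / 2) * ((k : ℝ) - 1) * ∑ x, w x := by
  obtain ⟨hcard, hne, hdis, hcov⟩ := hC
  have hWA : ∀ A ∈ C, (0:ℝ) < ∑ x ∈ A, w x := fun A hA =>
    Finset.sum_pos (fun x _ => hw x) (hne A hA)
  have hsumC : ∑ A ∈ C, ∑ x ∈ A, w x = ∑ x, w x := by
    rw [← Finset.sum_biUnion]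
    · apply Finset.sum_congr _ (fun _ _ => rfl)
      ext x
      simp only [Finset.mem_biUnion, Finset.mem_univ, iff_true]
      exact hcov x
    · intro A hA B hB hAB
      exact hdis A hA B hB hAB
  have key : ∀ A ∈ C, (∑ x ∈ A, ∑ y ∈ Aᶜ, s x y * w x * w y) / (∑ x ∈ A, w x)
      = lam * ((∑ x, w x) - ∑ x ∈ A, w x) := by
    intro A hA
    have hs : ∀ x ∈ A, ∀ y ∈ Aᶜ, s x y = lam := by
      intro x hx y hy
      apply hsep
      rintro ⟨B, hB, hxB, hyB⟩
      by_cases hAB : A = B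
      · exact (Finset.mem_compl.mp hy) (hAB ▸ hyB)
      · exact Finset.disjoint_left.mp (hdis A hA B hB hAB) hx hxB
    have hAc : ∑ y ∈ Aᶜ, w y = (∑ x, w x) - ∑ x ∈ A, w x := by
      have := Finset.sum_add_sum_compl A w
      linarith
    have h1 : (∑ x ∈ A, ∑ y ∈ Aᶜ, s x y * w x * w y)
        = (∑ x ∈ A, w x) * (lam * ((∑ x, w x) - ∑ x ∈ A, w x)) := by
      rw [← hAc, Finset.sum_mul]
      apply Finset.sum_congr rfl
      intro x hx
      rw [Finset.mul_sum, Finset.mul_sum]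
      apply Finset.sum_congr rfl
      intro y hy
      rw [hs x hx y hy]; ring
    rw [h1, mul_comm, mul_div_assoc, div_self (ne_of_gt (hWA A hA)), mul_one]
  rw [rcut, Finset.sum_congr rfl key, ← Finset.mul_sum, Finset.sum_sub_distrib,
    Finset.sum_const, hsumC, hcard]
  ring
end

section
/- Let C be a k-clustering of (X, s) that is perfect and separation-uniform. Then for every weight function w on X and every k-clustering C' of X with C' ≠ C, rcut(C', w[X], s) > rcut(C, w[X], s); that is, C is the unique minimizer of the ratio-cut objective among all k-clusterings of X, for every weight function. -/
open Finset

/-- `C` is perfect: within-cluster similarities all exceed between-cluster similarities. -/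
def IsPerfect {X : Type*} [DecidableEq X] (C : Finset (Finset X)) (s : X → X → ℝ) : Prop :=
  ∀ x₁ x₂ x₃ x₄ : X, SameCluster C x₁ x₂ → ¬ SameCluster C x₃ x₄ → s x₃ x₄ < s x₁ x₂

/-- `C` is separation-uniform: all between-cluster similarities are equal. -/
def IsSeparationUniform {X : Type*} [DecidableEq X]
    (C : Finset (Finset X)) (s : X → X → ℝ) : Prop :=
  ∃ lam : ℝ, ∀ x y : X, ¬ SameCluster C x y → s x y = lam

section Aux

variable {X : Type*} [Fintype X] [DecidableEq X]

/-- Two clusters sharing a point are equal. -/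
lemma cluster_eq_of_mem {C : Finset (Finset X)} {k : ℕ} (hC : IsClustering C k)
    {A B : Finset X} (hA : A ∈ C) (hB : B ∈ C) {x : X} (hxA : x ∈ A) (hxB : x ∈ B) :
    A = B := by
  by_contra h
  exact (Finset.disjoint_left.mp (hC.2.2.1 A hA B hB h) hxA) hxB

lemma not_sameCluster {C : Finset (Finset X)} {k : ℕ} (hC : IsClustering C k)
    {A : Finset X} (hA : A ∈ C) {x y : X} (hx : x ∈ A) (hy : y ∉ A) :
    ¬ SameCluster C x y := by
  rintro ⟨B, hB, hxB, hyB⟩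
  exact hy ((cluster_eq_of_mem hC hA hB hx hxB) ▸ hyB)

lemma exists_not_sameCluster {C : Finset (Finset X)} {k : ℕ} (hC : IsClustering C k)
    (hk : 1 < k) : ∃ x y : X, ¬ SameCluster C x y := by
  obtain ⟨A, hA, B, hB, hAB⟩ := Finset.one_lt_card.mp (by rw [hC.1]; exact hk)
  obtain ⟨x, hx⟩ := hC.2.1 A hA
  obtain ⟨y, hy⟩ := hC.2.1 B hB
  exact ⟨x, y, not_sameCluster hC hA hx
    (Finset.disjoint_left.mp (hC.2.2.1 B hB A hA (Ne.symm hAB)) hy)⟩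

lemma sum_partition {C : Finset (Finset X)} {k : ℕ} (hC : IsClustering C k) (f : X → ℝ) :
    ∑ A ∈ C, ∑ x ∈ A, f x = ∑ x, f x := by
  have hd : Set.PairwiseDisjoint (↑C) (id : Finset X → Finset X) := by
    intro A hA B hB hAB
    exact hC.2.2.1 A hA B hB hAB
  have huniv : C.biUnion id = Finset.univ := by
    apply Finset.eq_univ_iff_forall.mpr
    intro x
    obtain ⟨A, hA, hx⟩ := hC.2.2.2 x
    exact Finset.mem_biUnion.mpr ⟨A, hA, hx⟩
  rw [← huniv, Finset.sum_biUnion hd]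
  rfl

/-- If every pair that is together in `C` is together in `C'`, then `C' = C`. -/
lemma clustering_eq_of_refines {C C' : Finset (Finset X)} {k : ℕ}
    (hC : IsClustering C k) (hC' : IsClustering C' k)
    (h : ∀ x y, SameCluster C x y → SameCluster C' x y) : C' = C := by
  -- every cluster of C is contained in some cluster of C'
  have step1 : ∀ A ∈ C, ∃ A' ∈ C', A ⊆ A' := by
    intro A hA
    obtain ⟨x, hx⟩ := hC.2.1 A hA
    obtain ⟨A', hA', hxA'⟩ := hC'.2.2.2 x
    refine ⟨A', hA', fun y hy => ?_⟩
    obtain ⟨D, hD, hxD, hyD⟩ := h x y ⟨A, hA, hx, hy⟩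
    exact (cluster_eq_of_mem hC' hD hA' hxD hxA') ▸ hyD
  set F : Finset X → Finset (Finset X) := fun A' => C.filter (fun A => A ⊆ A') with hF
  have hbi : C = C'.biUnion F := by
    ext A
    simp only [Finset.mem_biUnion, hF, Finset.mem_filter]
    constructor
    · intro hA
      obtain ⟨A', hA', hsub⟩ := step1 A hA
      exact ⟨A', hA', hA, hsub⟩
    · rintro ⟨A', _, hA, _⟩
      exact hA
  have hdisj : ∀ A'₁ ∈ C', ∀ A'₂ ∈ C', A'₁ ≠ A'₂ → Disjoint (F A'₁) (F A'₂) := by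
    intro A'₁ h1 A'₂ h2 hne
    rw [Finset.disjoint_left]
    intro A hA1 hA2
    simp only [hF, Finset.mem_filter] at hA1 hA2
    obtain ⟨x, hx⟩ := hC.2.1 A hA1.1
    exact hne (cluster_eq_of_mem hC' h1 h2 (hA1.2 hx) (hA2.2 hx))
  have hcard : ∑ A' ∈ C', (F A').card = k := by
    rw [← Finset.card_biUnion hdisj, ← hbi, hC.1]
  have hpos : ∀ A' ∈ C', 1 ≤ (F A').card := by
    intro A' hA'
    obtain ⟨x, hx⟩ := hC'.2.1 A' hA'
    obtain ⟨A, hA, hxA⟩ := hC.2.2.2 x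
    obtain ⟨A'', hA'', hsub⟩ := step1 A hA
    have : A'' = A' := cluster_eq_of_mem hC' hA'' hA' (hsub hxA) hx
    refine Finset.card_pos.mpr ⟨A, ?_⟩
    simp only [hF, Finset.mem_filter]
    exact ⟨hA, this ▸ hsub⟩
  have hone : ∀ A' ∈ C', (F A').card = 1 := by
    have hsum : ∑ A' ∈ C', (F A').card = ∑ A' ∈ C', 1 := by
      rw [hcard, Finset.sum_const, smul_eq_mul, mul_one, hC'.1]
    intro A' hA'
    exact ((Finset.sum_eq_sum_iff_of_le (fun i hi => hpos i hi)).mp hsum.symm A' hA').symm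
  -- every cluster of C' is a cluster of C
  have hsub : C' ⊆ C := by
    intro A' hA'
    obtain ⟨A, hAeq⟩ := Finset.card_eq_one.mp (hone A' hA')
    have hAmem : A ∈ F A' := hAeq ▸ Finset.mem_singleton_self A
    simp only [hF, Finset.mem_filter] at hAmem
    obtain ⟨hAC, hAsub⟩ := hAmem
    have : A' = A := by
      apply Finset.Subset.antisymm _ hAsub
      intro y hy
      obtain ⟨B, hB, hyB⟩ := hC.2.2.2 y
      obtain ⟨A'', hA'', hsub'⟩ := step1 B hB
      have hAA : A'' = A' := cluster_eq_of_mem hC' hA'' hA' (hsub' hyB) hy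
      have hBF : B ∈ F A' := by
        simp only [hF, Finset.mem_filter]
        exact ⟨hB, hAA ▸ hsub'⟩
      rw [hAeq, Finset.mem_singleton] at hBF
      exact hBF ▸ hyB
    exact this ▸ hAC
  exact Finset.eq_of_subset_of_card_le hsub (by rw [hC.1, hC'.1])

end Aux

/-- if `C` is a perfect and separation-uniform k-clustering, then for every
weight function `w`, `C` is the unique minimizer of ratio-cut among k-clusterings: every
other k-clustering has strictly larger ratio-cut cost. -/
theorem rcut_unique_minimizer_of_perfect_separationUniform
    {X : Type*} [Fintype X] [DecidableEq X]
    (s : X → X → ℝ) (hsym : ∀ x y, s x y = s y x) (hnn : ∀ x y, 0 ≤ s x y)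
    (k : ℕ) (hk1 : 1 < k) (hk2 : k < Fintype.card X)
    (C : Finset (Finset X)) (hC : IsClustering C k)
    (hperf : IsPerfect C s) (hsep : IsSeparationUniform C s)
    (w : X → ℝ) (hw : IsWeight w)
    (C' : Finset (Finset X)) (hC' : IsClustering C' k) (hne : C' ≠ C) :
    rcut C w s < rcut C' w s := by
  classical
  obtain ⟨lam, hlam⟩ := hsep
  -- within-cluster similarities exceed lam
  have hwithin : ∀ x y, SameCluster C x y → lam < s x y := by
    intro x y hxy
    obtain ⟨a, b, hab⟩ := exists_not_sameCluster hC hk1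
    calc lam = s a b := (hlam a b hab).symm
    _ < s x y := hperf x y a b hxy hab
  set u : X → X → ℝ := fun x y => s x y - lam with hu
  have hunn : ∀ x y, 0 ≤ u x y := by
    intro x y
    by_cases hxy : SameCluster C x y
    · have := hwithin x y hxy; simp [hu]; linarith
    · simp [hu, hlam x y hxy]
  set W : ℝ := ∑ x, w x with hW
  have hwA : ∀ {D : Finset (Finset X)} {m : ℕ}, IsClustering D m → ∀ A ∈ D,
      0 < ∑ x ∈ A, w x := by
    intro D m hD A hA
    obtain ⟨x, hx⟩ := hD.2.1 A hA
    exact Finset.sum_pos (fun i _ => hw i) ⟨x, hx⟩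
  -- decomposition of rcut
  have hdecomp : ∀ (D : Finset (Finset X)), IsClustering D k →
      rcut D w s = (1/2) * (∑ A ∈ D, (∑ x ∈ A, ∑ y ∈ Aᶜ, u x y * w x * w y) / (∑ x ∈ A, w x))
        + (1/2) * lam * ((k : ℝ) * W - W) := by
    intro D hD
    have hterm : ∀ A ∈ D,
        (∑ x ∈ A, ∑ y ∈ Aᶜ, s x y * w x * w y) / (∑ x ∈ A, w x)
          = (∑ x ∈ A, ∑ y ∈ Aᶜ, u x y * w x * w y) / (∑ x ∈ A, w x)
            + lam * (W - ∑ x ∈ A, w x) := by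
      intro A hA
      have hAc : ∑ y ∈ Aᶜ, w y = W - ∑ x ∈ A, w x := by
        have := Finset.sum_compl_add_sum A w
        rw [hW]; linarith
      have hsplit : ∑ x ∈ A, ∑ y ∈ Aᶜ, s x y * w x * w y
          = (∑ x ∈ A, ∑ y ∈ Aᶜ, u x y * w x * w y)
            + lam * (∑ x ∈ A, w x) * (∑ y ∈ Aᶜ, w y) := by
        have : ∀ x y : X, s x y * w x * w y = u x y * w x * w y + lam * (w x * w y) := by
          intro x y; simp [hu]; ring
        simp_rw [this, Finset.sum_add_distrib, ← Finset.mul_sum]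
        rw [← Finset.sum_mul]
        ring
      have hA0 : (∑ x ∈ A, w x) ≠ 0 := (hwA hD A hA).ne'
      rw [hsplit, add_div, hAc]
      congr 1
      field_simp
    rw [rcut, Finset.sum_congr rfl hterm, Finset.sum_add_distrib, mul_add]
    congr 1
    have h1 : ∑ A ∈ D, lam * (W - ∑ x ∈ A, w x)
        = lam * ((k : ℝ) * W - W) := by
      rw [← Finset.mul_sum, Finset.sum_sub_distrib, Finset.sum_const, sum_partition hD w,
        hD.1, ← hW, nsmul_eq_mul]
    rw [h1]; ring
  -- residual of C is zero
  have hresC : ∑ A ∈ C, (∑ x ∈ A, ∑ y ∈ Aᶜ, u x y * w x * w y) / (∑ x ∈ A, w x) = 0 := by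
    apply Finset.sum_eq_zero
    intro A hA
    have : ∑ x ∈ A, ∑ y ∈ Aᶜ, u x y * w x * w y = 0 := by
      apply Finset.sum_eq_zero
      intro x hx
      apply Finset.sum_eq_zero
      intro y hy
      have : u x y = 0 := by
        have := hlam x y (not_sameCluster hC hA hx (Finset.mem_compl.mp hy))
        simp [hu, this]
      rw [this, zero_mul, zero_mul]
    rw [this, zero_div]
  -- residual of C' is positive
  have hwit : ∃ x y, SameCluster C x y ∧ ¬ SameCluster C' x y := by
    by_contra hcon
    push_neg at hcon
    exact hne (clustering_eq_of_refines hC hC' hcon)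
  obtain ⟨x, y, hxy, hxy'⟩ := hwit
  obtain ⟨A', hA', hxA'⟩ := hC'.2.2.2 x
  have hyA' : y ∉ A' := fun hy => hxy' ⟨A', hA', hxA', hy⟩
  have hresC' : 0 < ∑ A ∈ C', (∑ x ∈ A, ∑ y ∈ Aᶜ, u x y * w x * w y) / (∑ x ∈ A, w x) := by
    have hinner_nn : ∀ A : Finset X, ∀ a ∈ A, 0 ≤ ∑ b ∈ Aᶜ, u a b * w a * w b :=
      fun A a _ => Finset.sum_nonneg fun b _ =>
        mul_nonneg (mul_nonneg (hunn a b) (hw a).le) (hw b).le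
    apply Finset.sum_pos'
    · intro A hA
      exact div_nonneg (Finset.sum_nonneg (hinner_nn A)) (hwA hC' A hA).le
    · refine ⟨A', hA', ?_⟩
      apply div_pos _ (hwA hC' A' hA')
      apply Finset.sum_pos' (hinner_nn A')
      refine ⟨x, hxA', ?_⟩
      apply Finset.sum_pos'
      · intro b _
        exact mul_nonneg (mul_nonneg (hunn x b) (hw x).le) (hw b).le
      · refine ⟨y, Finset.mem_compl.mpr hyA', ?_⟩
        have hx0 : 0 < u x y := by
          have := hwithin x y hxy; simp [hu]; linarith
        exact mul_pos (mul_pos hx0 (hw x)) (hw y)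
  rw [hdecomp C hC, hdecomp C' hC', hresC]
  linarith
end

section
/- Let C = {C_1, …, C_k} be a k-clustering of (X, s). Suppose there are distinct clusters C_1, C_2 with |C_2| ≥ 2, a point x ∈ C_1 and a point y ∈ C_2 such that s(x,y) ≥ s(x,z) for all z ∈ C_2 and s(x,y) > s(x,a) for some a ∈ C_2. For W > 0 let w_W be the weight function with w_W(x) = W and w_W(z) = 1 for all z ≠ x, and let C' be the k-clustering obtained from C by moving y from C_2 to C_1 (i.e., replacing C_1 by C_1 ∪ {y} and C_2 by C_2 \ {y}). Then there exists W_0 > 0 such that for all W ≥ W_0, rcut(C', w_W[X], s) < rcut(C, w_W[X], s). -/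
open Finset

/-- moving `y` from `C₂` to `C₁` strictly decreases the ratio-cut cost once the
weight `W` put on `x` is large enough. -/
theorem rcut_move_point_improves
    {X : Type*} [Fintype X] [DecidableEq X]
    (s : X → X → ℝ) (hsym : ∀ x y, s x y = s y x) (hnn : ∀ x y, 0 ≤ s x y)
    (k : ℕ) (hk1 : 1 < k) (hk2 : k < Fintype.card X)
    (C : Finset (Finset X)) (hC : IsClustering C k)
    (C₁ C₂ : Finset X) (hC₁ : C₁ ∈ C) (hC₂ : C₂ ∈ C) (h12 : C₁ ≠ C₂)
    (hcard : 2 ≤ C₂.card)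
    (x y : X) (hx : x ∈ C₁) (hy : y ∈ C₂)
    (hmax : ∀ z ∈ C₂, s x z ≤ s x y)
    (a : X) (ha : a ∈ C₂) (hlt : s x a < s x y) :
    ∃ W₀ > (0 : ℝ), ∀ W ≥ W₀,
      rcut (insert (insert y C₁) (insert (C₂.erase y) ((C.erase C₁).erase C₂)))
        (fun z => if z = x then W else 1) s
      < rcut C (fun z => if z = x then W else 1) s := by
  classical
  obtain ⟨hcardC, hne, hdisj, hcover⟩ := hC
  have hd12 : Disjoint C₁ C₂ := hdisj C₁ hC₁ C₂ hC₂ h12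
  have hxC2 : x ∉ C₂ := Finset.disjoint_left.mp hd12 hx
  have hyC1 : y ∉ C₁ := fun h => (Finset.disjoint_left.mp hd12 h) hy
  set B₁ : Finset X := insert y C₁ with hB₁def
  set B₂ : Finset X := C₂.erase y with hB₂def
  set R : Finset (Finset X) := (C.erase C₁).erase C₂ with hRdef
  have hxB1 : x ∈ B₁ := Finset.mem_insert_of_mem hx
  have hxB2 : x ∉ B₂ := fun h => hxC2 (Finset.mem_of_mem_erase h)
  obtain ⟨z₀, hz₀C2, hz₀y⟩ := Finset.exists_mem_ne hcard y
  have hz₀B2 : z₀ ∈ B₂ := Finset.mem_erase.mpr ⟨hz₀y, hz₀C2⟩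
  -- distinctness facts for splitting sums
  have hB₁B₂ : B₁ ≠ B₂ := fun h => hxB2 (h ▸ hxB1)
  have hB₁R : B₁ ∉ R := by
    intro h
    have hB₁C : B₁ ∈ C := Finset.mem_of_mem_erase (Finset.mem_of_mem_erase h)
    rcases eq_or_ne C₁ B₁ with he | hne'
    · exact hyC1 (he ▸ Finset.mem_insert_self y C₁)
    · exact (Finset.disjoint_left.mp (hdisj _ hC₁ _ hB₁C hne') hx) hxB1
  have hB₂R : B₂ ∉ R := by
    intro h
    have hB₂C : B₂ ∈ C := Finset.mem_of_mem_erase (Finset.mem_of_mem_erase h)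
    have hne' : B₂ ≠ C₂ := (Finset.mem_erase.mp h).1
    exact (Finset.disjoint_left.mp (hdisj _ hC₂ _ hB₂C hne'.symm) hz₀C2) hz₀B2
  have hC2e : C₂ ∈ C.erase C₁ := Finset.mem_erase.mpr ⟨fun h => h12 h.symm, hC₂⟩
  -- numeric constants (independent of W)
  set nR : ℝ := (C₂.card : ℝ) with hnRdef
  have hn2 : (2:ℝ) ≤ nR := by rw [hnRdef]; exact_mod_cast hcard
  set n1 : ℝ := nR - 1 with hn1def
  have hnpos : 0 < nR := by linarith
  have hn1pos : 0 < n1 := by simp only [hn1def]; linarith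
  set σ : ℝ := ∑ u ∈ C₂, s u x with hσdef
  set σ' : ℝ := ∑ u ∈ B₂, s u x with hσ'def
  have hσ' : σ' = σ - s y x := Finset.sum_erase_eq_sub hy
  have hσlt : σ < nR * s y x := by
    have h1 : ∑ u ∈ C₂, s u x < ∑ u ∈ C₂, s y x := by
      refine Finset.sum_lt_sum (fun i hi => ?_) ⟨a, ha, ?_⟩
      · rw [hsym i x, hsym y x]; exact hmax i hi
      · rw [hsym a x, hsym y x]; exact hlt
    simpa [hnRdef, Finset.sum_const, nsmul_eq_mul] using h1
  set δ : ℝ := σ / nR - σ' / n1 with hδdef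
  have hδpos : 0 < δ := by
    have key : δ = (nR * s y x - σ) / (nR * n1) := by
      rw [hδdef, hσ']
      field_simp
      ring
    rw [key]
    exact div_pos (by linarith) (by positivity)
  set S : ℝ := ∑ v ∈ B₁ᶜ, s x v with hSdef
  set T : ℝ := ∑ u ∈ B₁.erase x, ∑ v ∈ B₁ᶜ, s u v with hTdef
  have hSnn : 0 ≤ S := Finset.sum_nonneg fun v _ => hnn x v
  have hTnn : 0 ≤ T := Finset.sum_nonneg fun u _ => Finset.sum_nonneg fun v _ => hnn u v
  set c : ℝ := ∑ u ∈ C₂, ∑ v ∈ C₂ᶜ.erase x, s u v with hcdef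
  set c' : ℝ := ∑ u ∈ B₂, ∑ v ∈ B₂ᶜ.erase x, s u v with hc'def
  have hcnn : 0 ≤ c := Finset.sum_nonneg fun u _ => Finset.sum_nonneg fun v _ => hnn u v
  have hc'nn : 0 ≤ c' := Finset.sum_nonneg fun u _ => Finset.sum_nonneg fun v _ => hnn u v
  set Q : ℝ := (S + T) + c' / n1 with hQdef
  clear_value B₁ B₂ R nR n1 σ σ' δ S T c c' Q
  refine ⟨max 1 (Q / δ + 1), lt_of_lt_of_le zero_lt_one (le_max_left _ _), ?_⟩
  intro W hW
  have hW1 : (1:ℝ) ≤ W := le_trans (le_max_left _ _) hW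
  have hWpos : (0:ℝ) < W := lt_of_lt_of_le zero_lt_one hW1
  have hQW : Q < W * δ := by
    have h1 : Q / δ + 1 ≤ W := le_trans (le_max_right _ _) hW
    have h2 : (Q / δ + 1) * δ ≤ W * δ := mul_le_mul_of_nonneg_right h1 hδpos.le
    have h3 : (Q / δ + 1) * δ = Q + δ := by
      rw [add_mul, one_mul, div_mul_cancel₀ _ hδpos.ne']
    linarith
  set w : X → ℝ := fun z => if z = x then W else 1 with hwdef
  have hwx : w x = W := if_pos rfl
  have hw1 : ∀ z, z ≠ x → w z = 1 := fun z hz => if_neg hz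
  clear_value w
  have hwpos : ∀ z, 0 < w z := by
    intro z
    by_cases h : z = x
    · rw [h, hwx]; exact hWpos
    · rw [hw1 z h]; exact zero_lt_one
  -- numerator/denominator computations
  have sumw_out : ∀ A : Finset X, x ∉ A → ∑ u ∈ A, w u = (A.card : ℝ) := by
    intro A hA
    rw [Finset.sum_congr rfl fun u hu => hw1 u (fun h => hA (h ▸ hu))]
    simp
  have cut_out : ∀ A : Finset X, x ∉ A →
      ∑ u ∈ A, ∑ v ∈ Aᶜ, s u v * w u * w v
        = W * (∑ u ∈ A, s u x) + ∑ u ∈ A, ∑ v ∈ Aᶜ.erase x, s u v := by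
    intro A hA
    have hxc : x ∈ Aᶜ := Finset.mem_compl.mpr hA
    rw [Finset.mul_sum, ← Finset.sum_add_distrib]
    refine Finset.sum_congr rfl fun u hu => ?_
    have h1 : w u = 1 := hw1 u (fun h => hA (h ▸ hu))
    rw [← Finset.add_sum_erase _ _ hxc, h1, hwx]
    have h2 : ∀ v ∈ Aᶜ.erase x, s u v * 1 * w v = s u v := fun v hv => by
      rw [hw1 v (Finset.mem_erase.mp hv).1]; ring
    rw [Finset.sum_congr rfl h2]
    ring
  have cut_in : ∀ A : Finset X, x ∈ A →
      ∑ u ∈ A, ∑ v ∈ Aᶜ, s u v * w u * w v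
        = W * (∑ v ∈ Aᶜ, s x v) + ∑ u ∈ A.erase x, ∑ v ∈ Aᶜ, s u v := by
    intro A hA
    rw [← Finset.add_sum_erase A (fun u => ∑ v ∈ Aᶜ, s u v * w u * w v) hA]
    congr 1
    · rw [Finset.mul_sum]
      refine Finset.sum_congr rfl fun v hv => ?_
      have hvx : v ≠ x := fun h => (Finset.mem_compl.mp hv) (h ▸ hA)
      rw [hwx, hw1 v hvx]; ring
    · refine Finset.sum_congr rfl fun u hu => Finset.sum_congr rfl fun v hv => ?_
      rw [hw1 u (Finset.mem_erase.mp hu).1,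
        hw1 v (fun h => (Finset.mem_compl.mp hv) (h ▸ hA))]
      ring
  -- the four cluster terms
  have hNC2 : ∑ u ∈ C₂, ∑ v ∈ C₂ᶜ, s u v * w u * w v = W * σ + c := by rw [hσdef, hcdef]; exact cut_out C₂ hxC2
  have hNB2 : ∑ u ∈ B₂, ∑ v ∈ B₂ᶜ, s u v * w u * w v = W * σ' + c' := by rw [hσ'def, hc'def]; exact cut_out B₂ hxB2
  have hNB1 : ∑ u ∈ B₁, ∑ v ∈ B₁ᶜ, s u v * w u * w v = W * S + T := by rw [hSdef, hTdef]; exact cut_in B₁ hxB1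
  have hDC2 : ∑ u ∈ C₂, w u = nR := by rw [hnRdef]; exact sumw_out C₂ hxC2
  have hDB2 : ∑ u ∈ B₂, w u = n1 := by
    have h1n : 1 ≤ C₂.card := le_trans one_le_two hcard
    rw [sumw_out B₂ hxB2, hB₂def, Finset.card_erase_of_mem hy, hn1def, hnRdef,
      Nat.cast_sub h1n, Nat.cast_one]
  have hDB1 : W ≤ ∑ u ∈ B₁, w u := by
    calc W = w x := hwx.symm
    _ ≤ ∑ u ∈ B₁, w u := Finset.single_le_sum (fun z _ => (hwpos z).le) hxB1
  have hNB1nn : (0:ℝ) ≤ ∑ u ∈ B₁, ∑ v ∈ B₁ᶜ, s u v * w u * w v :=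
    Finset.sum_nonneg fun u _ => Finset.sum_nonneg fun v _ =>
      mul_nonneg (mul_nonneg (hnn u v) (hwpos u).le) (hwpos v).le
  -- key per-cluster bounds
  have hfB1 : (∑ u ∈ B₁, ∑ v ∈ B₁ᶜ, s u v * w u * w v) / (∑ u ∈ B₁, w u) ≤ S + T := by
    have h1 : (∑ u ∈ B₁, ∑ v ∈ B₁ᶜ, s u v * w u * w v) / (∑ u ∈ B₁, w u)
        ≤ (∑ u ∈ B₁, ∑ v ∈ B₁ᶜ, s u v * w u * w v) / W :=
      div_le_div_of_nonneg_left hNB1nn hWpos hDB1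
    have h2 : (∑ u ∈ B₁, ∑ v ∈ B₁ᶜ, s u v * w u * w v) / W = S + T / W := by
      rw [hNB1, add_div, mul_div_cancel_left₀ _ hWpos.ne']
    have h3 : T / W ≤ T := div_le_self hTnn hW1
    linarith
  have hfC1 : (0:ℝ) ≤ (∑ u ∈ C₁, ∑ v ∈ C₁ᶜ, s u v * w u * w v) / (∑ u ∈ C₁, w u) := by
    refine div_nonneg ?_ ?_
    · exact Finset.sum_nonneg fun u _ => Finset.sum_nonneg fun v _ =>
        mul_nonneg (mul_nonneg (hnn u v) (hwpos u).le) (hwpos v).le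
    · exact Finset.sum_nonneg fun u _ => (hwpos u).le
  have hfB2 : (∑ u ∈ B₂, ∑ v ∈ B₂ᶜ, s u v * w u * w v) / (∑ u ∈ B₂, w u)
      = W * σ' / n1 + c' / n1 := by
    rw [hNB2, hDB2, add_div]
  have hfC2 : (∑ u ∈ C₂, ∑ v ∈ C₂ᶜ, s u v * w u * w v) / (∑ u ∈ C₂, w u)
      = W * σ / nR + c / nR := by
    rw [hNC2, hDC2, add_div]
  have hexp : W * δ = W * σ / nR - W * σ' / n1 := by rw [hδdef]; ring
  have hcnR : 0 ≤ c / nR := div_nonneg hcnn hnpos.le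
  -- assemble
  have key : (∑ u ∈ B₁, ∑ v ∈ B₁ᶜ, s u v * w u * w v) / (∑ u ∈ B₁, w u)
      + (∑ u ∈ B₂, ∑ v ∈ B₂ᶜ, s u v * w u * w v) / (∑ u ∈ B₂, w u)
      < (∑ u ∈ C₁, ∑ v ∈ C₁ᶜ, s u v * w u * w v) / (∑ u ∈ C₁, w u)
      + (∑ u ∈ C₂, ∑ v ∈ C₂ᶜ, s u v * w u * w v) / (∑ u ∈ C₂, w u) := by
    rw [hfB2, hfC2]
    rw [hQdef] at hQW
    linarith [hexp]
  -- split the rcut sums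
  rw [rcut, rcut]
  have hsplit' : ∑ A ∈ insert B₁ (insert B₂ R),
      (∑ u ∈ A, ∑ v ∈ Aᶜ, s u v * w u * w v) / (∑ u ∈ A, w u)
      = (∑ u ∈ B₁, ∑ v ∈ B₁ᶜ, s u v * w u * w v) / (∑ u ∈ B₁, w u)
      + ((∑ u ∈ B₂, ∑ v ∈ B₂ᶜ, s u v * w u * w v) / (∑ u ∈ B₂, w u)
        + ∑ A ∈ R, (∑ u ∈ A, ∑ v ∈ Aᶜ, s u v * w u * w v) / (∑ u ∈ A, w u)) := by
    rw [Finset.sum_insert (by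
      simp only [Finset.mem_insert]
      push_neg
      exact ⟨hB₁B₂, hB₁R⟩), Finset.sum_insert hB₂R]
  have hsplit : ∑ A ∈ C, (∑ u ∈ A, ∑ v ∈ Aᶜ, s u v * w u * w v) / (∑ u ∈ A, w u)
      = (∑ u ∈ C₁, ∑ v ∈ C₁ᶜ, s u v * w u * w v) / (∑ u ∈ C₁, w u)
      + ((∑ u ∈ C₂, ∑ v ∈ C₂ᶜ, s u v * w u * w v) / (∑ u ∈ C₂, w u)
        + ∑ A ∈ R, (∑ u ∈ A, ∑ v ∈ Aᶜ, s u v * w u * w v) / (∑ u ∈ A, w u)) := by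
    rw [hRdef, ← Finset.add_sum_erase C _ hC₁, ← Finset.add_sum_erase (C.erase C₁) _ hC2e]
  rw [hsplit', hsplit]
  linarith [key]
end

section
/- If a clustering algorithm is weight-separable then it is weight-responsive: let X be a finite set, let k satisfy 1 < k < |X|, and let A be any function assigning to each weight function w on X a k-clustering A(w) of X. Suppose that for every S ⊆ X with 2 ≤ |S| ≤ k there exists a weight function w such that every two distinct elements of S lie in different clusters of A(w). Then for every weight function w there exists a weight function w' with A(w') ≠ A(w). -/
open Finset

/-- if a clustering algorithm `A` (assigning a k-clustering to every weight
function) is weight-separable, then it is weight-responsive: for every weight function `w`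
there is a weight function `w'` with `A w' ≠ A w`. -/
theorem weight_responsive_of_weight_separable
    {X : Type*} [Fintype X] [DecidableEq X]
    (k : ℕ) (hk1 : 1 < k) (hk2 : k < Fintype.card X)
    (A : (X → ℝ) → Finset (Finset X))
    (hA : ∀ w : X → ℝ, IsWeight w → IsClustering (A w) k)
    (hsep : ∀ S : Finset X, 2 ≤ S.card → S.card ≤ k →
      ∃ w : X → ℝ, IsWeight w ∧ ∀ x ∈ S, ∀ y ∈ S, x ≠ y → ¬ SameCluster (A w) x y) :
    ∀ w : X → ℝ, IsWeight w → ∃ w' : X → ℝ, IsWeight w' ∧ A w' ≠ A w := by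
  intro w hw
  obtain ⟨hcard, hne, hdisj, hcov⟩ := hA w hw
  -- find a cluster with at least two elements
  have hbig : ∃ B ∈ A w, 2 ≤ B.card := by
    by_contra h
    push_neg at h
    have hsum : ∑ B ∈ A w, B.card ≤ (A w).card * 1 := by
      apply Finset.sum_le_card_nsmul
      intro B hB
      exact Nat.lt_succ_iff.mp (h B hB)
    have huniv : (A w).biUnion (fun B => B) = Finset.univ := by
      apply Finset.eq_univ_iff_forall.mpr
      intro x
      obtain ⟨B, hB, hxB⟩ := hcov x
      exact Finset.mem_biUnion.mpr ⟨B, hB, hxB⟩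
    have hsum2 : ∑ B ∈ A w, B.card = Fintype.card X := by
      rw [← Finset.card_biUnion (fun B hB B' hB' hne' => hdisj B hB B' hB' hne'),
        huniv, Finset.card_univ]
    omega
  obtain ⟨B, hB, hB2⟩ := hbig
  obtain ⟨x, hx, y, hy, hxy⟩ := Finset.one_lt_card.mp hB2
  have hScard : ({x, y} : Finset X).card = 2 := Finset.card_pair hxy
  obtain ⟨w', hw', hsep'⟩ := hsep {x, y} (le_of_eq hScard.symm) (hScard ▸ hk1)
  refine ⟨w', hw', fun heq => ?_⟩
  exact hsep' x (Finset.mem_insert_self _ _) y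
    (Finset.mem_insert_of_mem (Finset.mem_singleton_self _)) hxy
    ⟨B, heq ▸ hB, hx, hy⟩
end

section
/- Let C = {C_1, …, C_k} be a nice clustering of (X, d) and let w be any weight function on X. For any two distinct clusters C_i, C_j of C, any two disjoint nonempty subsets X_1, X_2 ⊆ C_i, and any nonempty subset X_3 ⊆ C_j, it holds that ℓ_AL(X_1, X_2, d, w) < ℓ_AL(X_1, X_3, d, w). -/
open Finset

/-- The average-linkage function on disjoint nonempty finite subsets `X₁, X₂`:
`ℓ_AL(X₁, X₂, d, w) = (Σ_{x∈X₁, y∈X₂} d(x,y) w(x) w(y)) / (w(X₁) w(X₂))`. -/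
noncomputable def ellAL {X : Type*} (X₁ X₂ : Finset X) (d : X → X → ℝ) (w : X → ℝ) : ℝ :=
  (∑ x ∈ X₁, ∑ y ∈ X₂, d x y * w x * w y) / ((∑ x ∈ X₁, w x) * (∑ y ∈ X₂, w y))

/-- `C` is nice: every point is strictly closer to every other point of its own cluster
than to any point of another cluster. -/
def IsNice {X : Type*} [DecidableEq X] (C : Finset (Finset X)) (d : X → X → ℝ) : Prop :=
  ∀ x₁ x₂ x₃ : X, SameCluster C x₁ x₂ → x₁ ≠ x₂ → ¬ SameCluster C x₁ x₃ →
    d x₁ x₂ < d x₁ x₃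

/-- for a nice clustering `C`, any weight function `w`, distinct clusters
`Cᵢ, Cⱼ` of `C`, disjoint nonempty `X₁, X₂ ⊆ Cᵢ`, and nonempty `X₃ ⊆ Cⱼ`, we have
`ℓ_AL(X₁, X₂, d, w) < ℓ_AL(X₁, X₃, d, w)`. -/
theorem ellAL_lt_of_nice
    {X : Type*} [Fintype X] [DecidableEq X]
    (d : X → X → ℝ) (hsym : ∀ x y, d x y = d y x) (hnn : ∀ x y, 0 ≤ d x y)
    (hzero : ∀ x y, d x y = 0 ↔ x = y)
    (k : ℕ) (hk1 : 1 < k) (hk2 : k < Fintype.card X)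
    (C : Finset (Finset X)) (hC : IsClustering C k) (hnice : IsNice C d)
    (w : X → ℝ) (hw : IsWeight w)
    (Ci Cj : Finset X) (hCi : Ci ∈ C) (hCj : Cj ∈ C) (hij : Ci ≠ Cj)
    (X₁ X₂ X₃ : Finset X) (hX₁ : X₁.Nonempty) (hX₂ : X₂.Nonempty) (hX₃ : X₃.Nonempty)
    (hX₁i : X₁ ⊆ Ci) (hX₂i : X₂ ⊆ Ci) (h12 : Disjoint X₁ X₂) (hX₃j : X₃ ⊆ Cj) :
    ellAL X₁ X₂ d w < ellAL X₁ X₃ d w := by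
  obtain ⟨-, -, hdisj, -⟩ := hC
  have hW : ∀ (S : Finset X), S.Nonempty → 0 < ∑ x ∈ S, w x :=
    fun S hS => Finset.sum_pos (fun x _ => hw x) hS
  have hW1 := hW X₁ hX₁
  have hW2 := hW X₂ hX₂
  have hW3 := hW X₃ hX₃
  have hnot : ∀ a ∈ X₁, ∀ c ∈ X₃, ¬ SameCluster C a c := by
    rintro a ha c hc ⟨A, hA, haA, hcA⟩
    have h1 : A = Ci := by
      by_contra h
      exact (Finset.disjoint_left.mp (hdisj A hA Ci hCi h)) haA (hX₁i ha)
    have h2 : A = Cj := by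
      by_contra h
      exact (Finset.disjoint_left.mp (hdisj A hA Cj hCj h)) hcA (hX₃j hc)
    exact hij (h1 ▸ h2)
  have hd : ∀ a ∈ X₁, ∀ b ∈ X₂, ∀ c ∈ X₃, d a b < d a c := by
    intro a ha b hb c hc
    refine hnice a b c ⟨Ci, hCi, hX₁i ha, hX₂i hb⟩ ?_ (hnot a ha c hc)
    rintro rfl
    exact (Finset.disjoint_left.mp h12) ha hb
  rw [ellAL, ellAL, div_lt_div_iff₀ (by positivity) (by positivity)]
  have key : ∀ a ∈ X₁,
      (∑ y ∈ X₂, d a y * w a * w y) * (∑ z ∈ X₃, w z)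
      < (∑ z ∈ X₃, d a z * w a * w z) * (∑ y ∈ X₂, w y) := by
    intro a ha
    rw [Finset.sum_mul_sum, Finset.sum_mul_sum, Finset.sum_comm]
    refine Finset.sum_lt_sum_of_nonempty hX₃ (fun z hz => ?_)
    refine Finset.sum_lt_sum_of_nonempty hX₂ (fun y hy => ?_)
    have h := hd a ha y hy z hz
    calc d a y * w a * w y * w z = d a y * (w a * w y * w z) := by ring
      _ < d a z * (w a * w y * w z) := by
          exact mul_lt_mul_of_pos_right h (mul_pos (mul_pos (hw a) (hw y)) (hw z))
      _ = d a z * w a * w z * w y := by ring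
  calc (∑ x ∈ X₁, ∑ y ∈ X₂, d x y * w x * w y) * ((∑ x ∈ X₁, w x) * (∑ z ∈ X₃, w z))
      = (∑ x ∈ X₁, w x) * ∑ x ∈ X₁, (∑ y ∈ X₂, d x y * w x * w y) * (∑ z ∈ X₃, w z) := by
        conv_rhs => rw [← Finset.sum_mul]
        ring
    _ < (∑ x ∈ X₁, w x) * ∑ x ∈ X₁, (∑ z ∈ X₃, d x z * w x * w z) * (∑ y ∈ X₂, w y) := by
        refine mul_lt_mul_of_pos_left (Finset.sum_lt_sum_of_nonempty hX₁ key) hW1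
    _ = (∑ x ∈ X₁, ∑ y ∈ X₃, d x y * w x * w y) * ((∑ x ∈ X₁, w x) * (∑ y ∈ X₂, w y)) := by
        conv_lhs => rw [← Finset.sum_mul]
        ring
end

section
/- Let X_1 and X_2 be disjoint nonempty finite subsets of (X, d), let x_1 ∈ X_1 and x_2 ∈ X_2, and for W > 0 let w_W be the weight function with w_W(x_1) = w_W(x_2) = W and w_W(z) = 1 for all other z. Then lim_{W→∞} ℓ_AL(X_1, X_2, d, w_W) = d(x_1, x_2). Moreover, if X_3 is a nonempty subset of X disjoint from X_1 and containing neither x_1 nor x_2, then lim_{W→∞} ℓ_AL(X_1, X_3, d, w_W) = (Σ_{y∈X_3} d(x_1, y)) / |X_3|. -/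
open Finset

private lemma sum_split_aux {X : Type*} [DecidableEq X] (s : Finset X) (p : X) (hp : p ∈ s)
    (f v : X → ℝ) (hv : ∀ z ∈ s.erase p, v z = 1) :
    ∑ z ∈ s, f z * v z = f p * v p + ∑ z ∈ s.erase p, f z := by
  rw [← Finset.add_sum_erase _ _ hp]
  congr 1
  exact Finset.sum_congr rfl fun z hz => by rw [hv z hz, mul_one]

private lemma div_div_div_aux (x y c : ℝ) (hc : c ≠ 0) : (x/c)/(y/c) = x/y := by
  rcases eq_or_ne y 0 with h|h
  · simp [h]
  · field_simp

private lemma tendsto_aux1 (a c b m n : ℝ) :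
    Filter.Tendsto (fun W : ℝ => (a*W^2 + c*W + b)/((W+m)*(W+n)))
      Filter.atTop (nhds a) := by
  have hc : Filter.Tendsto (fun W : ℝ => c / W) Filter.atTop (nhds 0) :=
    tendsto_const_nhds.div_atTop Filter.tendsto_id
  have hb : Filter.Tendsto (fun W : ℝ => b / W^2) Filter.atTop (nhds 0) :=
    tendsto_const_nhds.div_atTop (Filter.tendsto_pow_atTop two_ne_zero)
  have hm : Filter.Tendsto (fun W : ℝ => m / W) Filter.atTop (nhds 0) :=
    tendsto_const_nhds.div_atTop Filter.tendsto_id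
  have hn : Filter.Tendsto (fun W : ℝ => n / W) Filter.atTop (nhds 0) :=
    tendsto_const_nhds.div_atTop Filter.tendsto_id
  have h0 : Filter.Tendsto (fun W : ℝ => (a + c/W + b/W^2)/((1+m/W)*(1+n/W)))
      Filter.atTop (nhds a) := by
    have hnum : Filter.Tendsto (fun W : ℝ => a + c/W + b/W^2) Filter.atTop (nhds (a+0+0)) :=
      (tendsto_const_nhds.add hc).add hb
    have hden : Filter.Tendsto (fun W : ℝ => (1+m/W)*(1+n/W)) Filter.atTop (nhds ((1+0)*(1+0))) :=
      (tendsto_const_nhds.add hm).mul (tendsto_const_nhds.add hn)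
    simpa only [Pi.div_def, add_zero, mul_one, div_one] using hnum.div hden (by norm_num)
  refine h0.congr' ?_
  filter_upwards [Filter.eventually_gt_atTop 0] with W hW
  have hW0 : W ≠ 0 := ne_of_gt hW
  have hW2 : W^2 ≠ 0 := pow_ne_zero _ hW0
  have e1 : a + c/W + b/W^2 = (a*W^2 + c*W + b)/W^2 := by field_simp
  have e2 : (1+m/W)*(1+n/W) = ((W+m)*(W+n))/W^2 := by field_simp
  rw [e1, e2, div_div_div_aux _ _ _ hW2]

private lemma tendsto_aux2 (t c m k : ℝ) (hk : k ≠ 0) :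
    Filter.Tendsto (fun W : ℝ => (t*W + c)/((W+m)*k))
      Filter.atTop (nhds (t/k)) := by
  have hc : Filter.Tendsto (fun W : ℝ => c / W) Filter.atTop (nhds 0) :=
    tendsto_const_nhds.div_atTop Filter.tendsto_id
  have hm : Filter.Tendsto (fun W : ℝ => m / W) Filter.atTop (nhds 0) :=
    tendsto_const_nhds.div_atTop Filter.tendsto_id
  have h0 : Filter.Tendsto (fun W : ℝ => (t + c/W)/((1+m/W)*k))
      Filter.atTop (nhds (t/k)) := by
    have hnum : Filter.Tendsto (fun W : ℝ => t + c/W) Filter.atTop (nhds (t+0)) :=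
      tendsto_const_nhds.add hc
    have hden : Filter.Tendsto (fun W : ℝ => (1+m/W)*k) Filter.atTop (nhds ((1+0)*k)) :=
      (tendsto_const_nhds.add hm).mul tendsto_const_nhds
    simpa only [Pi.div_def, add_zero, one_mul] using hnum.div hden (by simpa using hk)
  refine h0.congr' ?_
  filter_upwards [Filter.eventually_gt_atTop 0] with W hW
  have hW0 : W ≠ 0 := ne_of_gt hW
  have e1 : t + c/W = (t*W + c)/W := by field_simp
  have e2 : (1+m/W)*k = ((W+m)*k)/W := by field_simp
  rw [e1, e2, div_div_div_aux _ _ _ hW0]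

/-- with weight `W` on `x₁ ∈ X₁` and `x₂ ∈ X₂` and weight `1` elsewhere,
`ℓ_AL(X₁, X₂, d, w_W) → d(x₁,x₂)` as `W → ∞`; and for any nonempty `X₃` disjoint from `X₁`
containing neither `x₁` nor `x₂`, `ℓ_AL(X₁, X₃, d, w_W) → (Σ_{y∈X₃} d(x₁,y)) / |X₃|`. -/
theorem ellAL_tendsto_of_two_heavy_points
    {X : Type*} [DecidableEq X]
    (d : X → X → ℝ) (hsym : ∀ x y, d x y = d y x) (hnn : ∀ x y, 0 ≤ d x y)
    (hzero : ∀ x y, d x y = 0 ↔ x = y)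
    (X₁ X₂ : Finset X) (h₁ : X₁.Nonempty) (h₂ : X₂.Nonempty) (hdisj : Disjoint X₁ X₂)
    (x₁ x₂ : X) (hx₁ : x₁ ∈ X₁) (hx₂ : x₂ ∈ X₂) :
    Filter.Tendsto
      (fun W : ℝ => ellAL X₁ X₂ d (fun z => if z = x₁ ∨ z = x₂ then W else 1))
      Filter.atTop (nhds (d x₁ x₂))
    ∧ ∀ X₃ : Finset X, X₃.Nonempty → Disjoint X₁ X₃ → x₁ ∉ X₃ → x₂ ∉ X₃ →
        Filter.Tendsto
          (fun W : ℝ => ellAL X₁ X₃ d (fun z => if z = x₁ ∨ z = x₂ then W else 1))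
          Filter.atTop (nhds ((∑ y ∈ X₃, d x₁ y) / (X₃.card : ℝ))) := by
  set v : ℝ → X → ℝ := fun W z => if z = x₁ ∨ z = x₂ then W else 1 with hv
  have hne12 : ∀ x ∈ X₁, x ≠ x₂ := fun x hx h =>
    (Finset.disjoint_left.mp hdisj hx) (h ▸ hx₂)
  have hne21 : ∀ y ∈ X₂, y ≠ x₁ := fun y hy h =>
    (Finset.disjoint_left.mp hdisj (h ▸ hx₁)) hy
  have hv1 : ∀ W : ℝ, v W x₁ = W := fun W => by simp [hv]
  have hv2 : ∀ W : ℝ, v W x₂ = W := fun W => by simp [hv]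
  have hvS1 : ∀ W : ℝ, ∀ z ∈ X₁.erase x₁, v W z = 1 := by
    intro W z hz
    have h1 : z ≠ x₁ := Finset.ne_of_mem_erase hz
    have h2 : z ≠ x₂ := hne12 z (Finset.mem_of_mem_erase hz)
    simp [hv, h1, h2]
  have hvS2 : ∀ W : ℝ, ∀ z ∈ X₂.erase x₂, v W z = 1 := by
    intro W z hz
    have h1 : z ≠ x₂ := Finset.ne_of_mem_erase hz
    have h2 : z ≠ x₁ := hne21 z (Finset.mem_of_mem_erase hz)
    simp [hv, h1, h2]
  -- weight sums
  have hw1 : ∀ W : ℝ, ∑ x ∈ X₁, v W x = W + ((X₁.erase x₁).card : ℝ) := by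
    intro W
    have := sum_split_aux X₁ x₁ hx₁ (fun _ => 1) (v W) (hvS1 W)
    simpa [hv1 W] using this
  have hw2 : ∀ W : ℝ, ∑ y ∈ X₂, v W y = W + ((X₂.erase x₂).card : ℝ) := by
    intro W
    have := sum_split_aux X₂ x₂ hx₂ (fun _ => 1) (v W) (hvS2 W)
    simpa [hv2 W] using this
  constructor
  · -- first limit
    have key : ∀ W : ℝ, ∑ x ∈ X₁, ∑ y ∈ X₂, d x y * v W x * v W y
        = (d x₁ x₂)*W^2
          + ((∑ y ∈ X₂.erase x₂, d x₁ y) + (∑ x ∈ X₁.erase x₁, d x x₂))*W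
          + ∑ x ∈ X₁.erase x₁, ∑ y ∈ X₂.erase x₂, d x y := by
      intro W
      have inner : ∀ x : X, ∑ y ∈ X₂, d x y * v W x * v W y
          = (d x x₂ * W + ∑ y ∈ X₂.erase x₂, d x y) * v W x := by
        intro x
        have := sum_split_aux X₂ x₂ hx₂ (fun y => d x y) (v W) (hvS2 W)
        calc ∑ y ∈ X₂, d x y * v W x * v W y
            = (∑ y ∈ X₂, d x y * v W y) * v W x := by
              rw [Finset.sum_mul]; exact Finset.sum_congr rfl fun y _ => by ring
          _ = (d x x₂ * W + ∑ y ∈ X₂.erase x₂, d x y) * v W x := by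
              rw [this, hv2 W]
      calc ∑ x ∈ X₁, ∑ y ∈ X₂, d x y * v W x * v W y
          = ∑ x ∈ X₁, (d x x₂ * W + ∑ y ∈ X₂.erase x₂, d x y) * v W x :=
            Finset.sum_congr rfl fun x _ => inner x
        _ = (d x₁ x₂ * W + ∑ y ∈ X₂.erase x₂, d x₁ y) * v W x₁
            + ∑ x ∈ X₁.erase x₁, (d x x₂ * W + ∑ y ∈ X₂.erase x₂, d x y) :=
            sum_split_aux X₁ x₁ hx₁ _ (v W) (hvS1 W)
        _ = (d x₁ x₂)*W^2
            + ((∑ y ∈ X₂.erase x₂, d x₁ y) + (∑ x ∈ X₁.erase x₁, d x x₂))*W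
            + ∑ x ∈ X₁.erase x₁, ∑ y ∈ X₂.erase x₂, d x y := by
            rw [hv1 W, Finset.sum_add_distrib, ← Finset.sum_mul]
            ring
    have := tendsto_aux1 (d x₁ x₂)
      ((∑ y ∈ X₂.erase x₂, d x₁ y) + (∑ x ∈ X₁.erase x₁, d x x₂))
      (∑ x ∈ X₁.erase x₁, ∑ y ∈ X₂.erase x₂, d x y)
      ((X₁.erase x₁).card : ℝ) ((X₂.erase x₂).card : ℝ)
    refine this.congr fun W => ?_
    rw [ellAL, key W, hw1 W, hw2 W]
  · -- second limit
    intro X₃ h₃ hdisj3 hx₁3 hx₂3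
    have hv3 : ∀ W : ℝ, ∀ y ∈ X₃, v W y = 1 := by
      intro W y hy
      have h1 : y ≠ x₁ := fun h => hx₁3 (h ▸ hy)
      have h2 : y ≠ x₂ := fun h => hx₂3 (h ▸ hy)
      simp [hv, h1, h2]
    have hw3 : ∀ W : ℝ, ∑ y ∈ X₃, v W y = (X₃.card : ℝ) := by
      intro W
      rw [Finset.sum_congr rfl (hv3 W), Finset.sum_const, nsmul_eq_mul, mul_one]
    have key : ∀ W : ℝ, ∑ x ∈ X₁, ∑ y ∈ X₃, d x y * v W x * v W y
        = (∑ y ∈ X₃, d x₁ y)*W + ∑ x ∈ X₁.erase x₁, ∑ y ∈ X₃, d x y := by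
      intro W
      have inner : ∀ x : X, ∑ y ∈ X₃, d x y * v W x * v W y
          = (∑ y ∈ X₃, d x y) * v W x := by
        intro x
        rw [Finset.sum_mul]
        exact Finset.sum_congr rfl fun y hy => by rw [hv3 W y hy]; ring
      calc ∑ x ∈ X₁, ∑ y ∈ X₃, d x y * v W x * v W y
          = ∑ x ∈ X₁, (∑ y ∈ X₃, d x y) * v W x :=
            Finset.sum_congr rfl fun x _ => inner x
        _ = (∑ y ∈ X₃, d x₁ y) * v W x₁ + ∑ x ∈ X₁.erase x₁, ∑ y ∈ X₃, d x y :=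
            sum_split_aux X₁ x₁ hx₁ _ (v W) (hvS1 W)
        _ = (∑ y ∈ X₃, d x₁ y)*W + ∑ x ∈ X₁.erase x₁, ∑ y ∈ X₃, d x y := by
            rw [hv1 W]
    have hk : (X₃.card : ℝ) ≠ 0 := by
      have : 0 < X₃.card := Finset.card_pos.mpr h₃
      exact ne_of_gt (by exact_mod_cast this)
    have := tendsto_aux2 (∑ y ∈ X₃, d x₁ y)
      (∑ x ∈ X₁.erase x₁, ∑ y ∈ X₃, d x y)
      ((X₁.erase x₁).card : ℝ) (X₃.card : ℝ) hk
    refine this.congr fun W => ?_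
    rw [ellAL, key W, hw1 W, hw3 W]
end
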